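/- The m × m grid graph has tree-width exactly m (for m ≥ 2). -/

import Mathlib

/-- A tree decomposition of a graph `G`. -/
structure TreeDecomp {V : Type} (G : SimpleGraph V) where
  ι : Type
  T : SimpleGraph ι
  conn : T.Connected
  acyc : T.IsAcyclic
  bag : ι → Finset V
  mem_vert : ∀ v : V, ∃ i, v ∈ bag i
  mem_edge : ∀ u v : V, G.Adj u v → ∃ i, u ∈ bag i ∧ v ∈ bag i
  coherent : ∀ v : V, ∀ i j : ι, v ∈ bag i → v ∈ bag j →
    ∀ p : T.Walk i j, p.IsPath → ∀ x ∈ p.support, v ∈ bag x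

/-- The tree-width of a graph, via tree decompositions. -/
noncomputable def treewidth {V : Type} (G : SimpleGraph V) : ℕ :=
  sInf {n : ℕ | ∃ d : TreeDecomp G, ∀ i, (d.bag i).card ≤ n + 1}

/-- The `m × m` grid graph: `(i,j)` and `(i',j')` are adjacent iff
`|i-i'| + |j-j'| = 1`. -/
def gridGraph (m : ℕ) : SimpleGraph (Fin m × Fin m) :=
  SimpleGraph.fromRel (fun p q =>
    (p.1 = q.1 ∧ p.2.val + 1 = q.2.val) ∨ (p.2 = q.2 ∧ p.1.val + 1 = q.1.val))

open SimpleGraph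

namespace TWAux


variable {ι : Type} {T : SimpleGraph ι}

/-- Connectivity within a set of nodes, via walks staying in the set. -/
def ConnIn (T : SimpleGraph ι) (N : Set ι) (a b : ι) : Prop :=
  ∃ p : T.Walk a b, ∀ x ∈ p.support, x ∈ N

/-- A set of nodes all of whose members are pairwise connected within the set. -/
def IsSubtree (T : SimpleGraph ι) (N : Set ι) : Prop :=
  ∀ ⦃a⦄, a ∈ N → ∀ ⦃b⦄, b ∈ N → ConnIn T N a b

lemma ConnIn.mono {N N' : Set ι} (h : N ⊆ N') {a b : ι} (hc : ConnIn T N a b) :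
    ConnIn T N' a b := by
  obtain ⟨p, hp⟩ := hc
  exact ⟨p, fun x hx => h (hp x hx)⟩

lemma ConnIn.trans {N : Set ι} {a b c : ι} (h1 : ConnIn T N a b) (h2 : ConnIn T N b c) :
    ConnIn T N a c := by
  obtain ⟨p, hp⟩ := h1
  obtain ⟨q, hq⟩ := h2
  refine ⟨p.append q, fun x hx => ?_⟩
  rcases (SimpleGraph.Walk.mem_support_append_iff _ _).1 hx with h | h
  · exact hp x h
  · exact hq x h

lemma ConnIn.path {N : Set ι} {a b : ι} (h : ConnIn T N a b) :
    ∃ p : T.Walk a b, p.IsPath ∧ ∀ x ∈ p.support, x ∈ N := by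
  classical
  obtain ⟨p, hp⟩ := h
  exact ⟨p.bypass, p.bypass_isPath, fun x hx => hp x (p.support_bypass_subset hx)⟩

lemma walk_eq (ha : T.IsAcyclic) {a b : ι} (p q : T.Walk a b)
    (hp : p.IsPath) (hq : q.IsPath) : p = q := by
  have := ha.path_unique ⟨p, hp⟩ ⟨q, hq⟩
  exact congrArg Subtype.val this

lemma exists_boundary {P : Set ι} {a b : ι} (w : T.Walk a b) (hb : b ∈ P) (hha : a ∉ P) :
    ∃ y z, T.Adj y z ∧ y ∈ w.support ∧ z ∈ w.support ∧ y ∉ P ∧ z ∈ P := by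
  induction w with
  | nil => exact absurd hb hha
  | @cons u v b h w ih =>
    by_cases hv : v ∈ P
    · exact ⟨u, v, h, by simp, by simp, hha, hv⟩
    · obtain ⟨y, z, hyz, hys, hzs, hyP, hzP⟩ := ih hb hv
      exact ⟨y, z, hyz, by simp [hys], by simp [hzs], hyP, hzP⟩

lemma IsSubtree.inter (ha : T.IsAcyclic) {A B : Set ι}
    (hA : IsSubtree T A) (hB : IsSubtree T B) : IsSubtree T (A ∩ B) := by
  intro u hu w hw
  obtain ⟨p, hpP, hpA⟩ := (hA hu.1 hw.1).path
  obtain ⟨q, hqP, hqB⟩ := (hB hu.2 hw.2).path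
  obtain rfl := walk_eq ha p q hpP hqP
  exact ⟨p, fun x hx => ⟨hpA x hx, hqB x hx⟩⟩

lemma helly3 (ha : T.IsAcyclic) {A B C : Set ι}
    (hA : IsSubtree T A) (hB : IsSubtree T B) (hC : IsSubtree T C)
    (hAB : (A ∩ B).Nonempty) (hAC : (A ∩ C).Nonempty) (hBC : (B ∩ C).Nonempty) :
    (A ∩ B ∩ C).Nonempty := by
  classical
  obtain ⟨x, hxA, hxB⟩ := hAB
  obtain ⟨a, haA, haC⟩ := hAC
  obtain ⟨b, hbB, hbC⟩ := hBC
  by_cases haB : a ∈ B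
  · exact ⟨a, ⟨haA, haB⟩, haC⟩
  obtain ⟨r, hrP, hrC⟩ := (hC haC hbC).path
  obtain ⟨p₁, hp₁⟩ := hA haA hxA
  obtain ⟨p₂, hp₂⟩ := hB hxB hbB
  have hr' : ∀ y ∈ r.support, y ∈ A ∪ B := by
    have heq : r = (p₁.append p₂).bypass :=
      walk_eq ha _ _ hrP ((p₁.append p₂).bypass_isPath)
    intro y hy
    rw [heq] at hy
    have := (p₁.append p₂).support_bypass_subset hy
    rcases (SimpleGraph.Walk.mem_support_append_iff _ _).1 this with h | h
    · exact Or.inl (hp₁ _ h)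
    · exact Or.inr (hp₂ _ h)
  obtain ⟨y, z, hyz, hys, hzs, hyB, hzB⟩ := exists_boundary r hbB haB
  have hyA : y ∈ A := (hr' y hys).resolve_right hyB
  have hyC : y ∈ C := hrC y hys
  have hzC : z ∈ C := hrC z hzs
  obtain ⟨q₁, hq₁P, hq₁⟩ := (hA hyA hxA).path
  obtain ⟨q₂, hq₂P, hq₂⟩ := (hB hzB hxB).path
  by_cases hy2 : y ∈ q₂.support
  · exact ⟨y, ⟨hyA, hq₂ y hy2⟩, hyC⟩
  · have hw : (SimpleGraph.Walk.cons hyz q₂).IsPath :=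
      (SimpleGraph.Walk.cons_isPath_iff _ _).2 ⟨hq₂P, hy2⟩
    have heq : q₁ = SimpleGraph.Walk.cons hyz q₂ := walk_eq ha _ _ hq₁P hw
    have hzA : z ∈ A := hq₁ z (by rw [heq]; simp)
    exact ⟨z, ⟨hzA, hzB⟩, hzC⟩

lemma helly (ha : T.IsAcyclic) {α : Type} [DecidableEq α] (s : Finset α) :
    ∀ (F : α → Set ι), s.Nonempty → (∀ a ∈ s, IsSubtree T (F a)) →
      (∀ a ∈ s, ∀ b ∈ s, (F a ∩ F b).Nonempty) →
      ∃ t, ∀ a ∈ s, t ∈ F a := by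
  classical
  induction s using Finset.induction_on with
  | empty => intro F hs _ _; exact absurd hs (by simp)
  | @insert a s hanotin ih =>
    intro F _ hsub hpair
    rcases s.eq_empty_or_nonempty with rfl | hsne
    · obtain ⟨t, ht, _⟩ := hpair a (by simp) a (by simp)
      exact ⟨t, by simpa using ht⟩
    obtain ⟨b, hb⟩ := hsne
    have hmem : ∀ c, c ∈ s → c ∈ insert a s := fun c hc => Finset.mem_insert_of_mem hc
    have hain : a ∈ insert a s := Finset.mem_insert_self a s
    set F' : α → Set ι := Function.update F b (F a ∩ F b) with hF'
    have hsub' : ∀ c ∈ s, IsSubtree T (F' c) := by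
      intro c hc
      by_cases hcb : c = b
      · subst hcb
        simp only [hF', Function.update_self]
        exact (hsub a hain).inter ha (hsub c (hmem c hc))
      · simpa only [hF', Function.update_of_ne hcb] using hsub c (hmem c hc)
    have key : ∀ c ∈ s, (F a ∩ F b ∩ F c).Nonempty := by
      intro c hc
      by_cases hcb : c = b
      · subst hcb
        obtain ⟨t, ht⟩ := hpair a hain c (hmem c hc)
        exact ⟨t, ht, ht.2⟩
      · exact helly3 ha (hsub a hain) (hsub b (hmem b hb)) (hsub c (hmem c hc))
          (hpair a hain b (hmem b hb)) (hpair a hain c (hmem c hc))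
          (hpair b (hmem b hb) c (hmem c hc))
    have hpair' : ∀ c ∈ s, ∀ e ∈ s, (F' c ∩ F' e).Nonempty := by
      intro c hc e he
      by_cases hcb : c = b <;> by_cases heb : e = b
      · rw [hcb, heb]
        obtain ⟨t, ht⟩ := hpair a hain b (hmem b hb)
        refine ⟨t, ?_, ?_⟩ <;> · simp only [hF', Function.update_self]; exact ht
      · rw [hcb]
        obtain ⟨t, ht1, ht2⟩ := key e he
        refine ⟨t, ?_, ?_⟩
        · simp only [hF', Function.update_self]; exact ht1
        · simp only [hF', Function.update_of_ne heb]; exact ht2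
      · rw [heb]
        obtain ⟨t, ht1, ht2⟩ := key c hc
        refine ⟨t, ?_, ?_⟩
        · simp only [hF', Function.update_of_ne hcb]; exact ht2
        · simp only [hF', Function.update_self]; exact ht1
      · simp only [hF', Function.update_of_ne hcb, Function.update_of_ne heb]
        exact hpair c (hmem c hc) e (hmem e he)
    obtain ⟨t, ht⟩ := ih F' ⟨b, hb⟩ hsub' hpair'
    have htb := ht b hb
    simp only [hF', Function.update_self] at htb
    refine ⟨t, fun c hc => ?_⟩
    rcases Finset.mem_insert.1 hc with rfl | hcs
    · exact htb.1
    · by_cases hcb : c = b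
      · subst hcb; exact htb.2
      · have := ht c hcs
        simpa only [hF', Function.update_of_ne hcb] using this


variable {V : Type} {G : SimpleGraph V}

/-- connectivity of a vertex set in `G` via walks staying inside. -/
def GConnIn (G : SimpleGraph V) (X : Set V) : Prop :=
  ∀ u ∈ X, ∀ v ∈ X, ∃ w : G.Walk u v, ∀ x ∈ w.support, x ∈ X

lemma bag_connIn (d : TreeDecomp G) {v : V} {t₁ t₂ : d.ι}
    (h₁ : v ∈ d.bag t₁) (h₂ : v ∈ d.bag t₂) :
    ConnIn d.T {s | v ∈ d.bag s} t₁ t₂ := by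
  classical
  obtain ⟨w⟩ := d.conn t₁ t₂
  exact ⟨w.bypass, fun x hx =>
    d.coherent v t₁ t₂ h₁ h₂ w.bypass w.bypass_isPath x hx⟩

/-- The nodes whose bags meet a given vertex set. -/
def nodes (d : TreeDecomp G) (X : Set V) : Set d.ι := {t | ∃ v ∈ X, v ∈ d.bag t}

lemma nodes_aux (d : TreeDecomp G) {X : Set V} {u v : V} (w : G.Walk u v)
    (hw : ∀ x ∈ w.support, x ∈ X) :
    ∀ t₁ t₂ : d.ι, u ∈ d.bag t₁ → v ∈ d.bag t₂ → ConnIn d.T (nodes d X) t₁ t₂ := by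
  induction w with
  | nil =>
    intro t₁ t₂ h₁ h₂
    exact (bag_connIn d h₁ h₂).mono
      (fun s hs => show s ∈ nodes d X from ⟨_, hw _ (SimpleGraph.Walk.start_mem_support _), hs⟩)
  | @cons u u' v h w ih =>
    intro t₁ t₂ h₁ h₂
    obtain ⟨s, hs₁, hs₂⟩ := d.mem_edge _ _ h
    have c1 : ConnIn d.T (nodes d X) t₁ s :=
      (bag_connIn d h₁ hs₁).mono
        (fun x hx => show x ∈ nodes d X from ⟨u, hw u (by simp), hx⟩)
    have c2 : ConnIn d.T (nodes d X) s t₂ :=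
      ih (fun x hx => hw x (by simp [hx])) s t₂ hs₂ h₂
    exact c1.trans c2

lemma nodes_subtree (d : TreeDecomp G) {X : Set V} (hX : GConnIn G X) :
    IsSubtree d.T (nodes d X) := by
  rintro t₁ ⟨v₁, hv₁X, hv₁⟩ t₂ ⟨v₂, hv₂X, hv₂⟩
  obtain ⟨w, hw⟩ := hX v₁ hv₁X v₂ hv₂X
  exact nodes_aux d w hw t₁ t₂ hv₁ hv₂

/-- Main bramble lemma: some bag meets every set of the family. -/
lemma exists_hitting_bag (d : TreeDecomp G) {α : Type} [DecidableEq α]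
    (s : Finset α) (hs : s.Nonempty) (F : α → Set V)
    (hconn : ∀ a ∈ s, GConnIn G (F a))
    (htouch : ∀ a ∈ s, ∀ b ∈ s,
      (F a ∩ F b).Nonempty ∨ ∃ u ∈ F a, ∃ v ∈ F b, G.Adj u v) :
    ∃ t, ∀ a ∈ s, ∃ v ∈ F a, v ∈ d.bag t := by
  classical
  obtain ⟨t, ht⟩ := helly d.acyc s (fun a => nodes d (F a)) hs
    (fun a ha => nodes_subtree d (hconn a ha))
    (by
      intro a ha b hb
      rcases htouch a ha b hb with ⟨v, hva, hvb⟩ | ⟨u, hu, v, hv, hadj⟩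
      · obtain ⟨t, htv⟩ := d.mem_vert v
        exact ⟨t, ⟨v, hva, htv⟩, ⟨v, hvb, htv⟩⟩
      · obtain ⟨t, ht₁, ht₂⟩ := d.mem_edge u v hadj
        exact ⟨t, ⟨u, hu, ht₁⟩, ⟨v, hv, ht₂⟩⟩)
  exact ⟨t, fun a ha => ht a ha⟩



lemma adjH {m : ℕ} {i j j' : Fin m} (h : j.val + 1 = j'.val) :
    (gridGraph m).Adj (i, j) (i, j') := by
  refine ⟨?_, Or.inl (Or.inl ⟨rfl, h⟩)⟩
  simp only [ne_eq, Prod.mk.injEq, Fin.ext_iff]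
  rintro ⟨-, h2⟩; omega

lemma adjV {m : ℕ} {i i' j : Fin m} (h : i.val + 1 = i'.val) :
    (gridGraph m).Adj (i, j) (i', j) := by
  refine ⟨?_, Or.inl (Or.inr ⟨rfl, h⟩)⟩
  simp only [ne_eq, Prod.mk.injEq, Fin.ext_iff]
  rintro ⟨h2, -⟩; omega

lemma rowWalkUp {m : ℕ} (i : Fin m) :
    ∀ (k : ℕ) (a b : Fin m), a.val + k = b.val →
    ∃ w : (gridGraph m).Walk (i, a) (i, b),
      ∀ x ∈ w.support, x.1 = i ∧ a.val ≤ x.2.val ∧ x.2.val ≤ b.val := by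
  intro k
  induction k with
  | zero =>
    intro a b h
    have hab : a = b := Fin.ext (by omega)
    subst hab
    exact ⟨.nil, by simp⟩
  | succ k ih =>
    intro a b h
    have hb := b.isLt
    have ha1 : a.val + 1 < m := by omega
    obtain ⟨w, hw⟩ := ih ⟨a.val + 1, ha1⟩ b (by simp; omega)
    refine ⟨.cons (adjH (by simp)) w, ?_⟩
    intro x hx
    rcases List.mem_cons.1 (by simpa using hx) with rfl | hx'
    · exact ⟨rfl, le_refl _, show a.val ≤ b.val by omega⟩
    · obtain ⟨h1, h2, h3⟩ := hw x hx'
      exact ⟨h1, by simp at h2; omega, h3⟩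

lemma colWalkUp {m : ℕ} (j : Fin m) :
    ∀ (k : ℕ) (a b : Fin m), a.val + k = b.val →
    ∃ w : (gridGraph m).Walk (a, j) (b, j),
      ∀ x ∈ w.support, x.2 = j ∧ a.val ≤ x.1.val ∧ x.1.val ≤ b.val := by
  intro k
  induction k with
  | zero =>
    intro a b h
    have hab : a = b := Fin.ext (by omega)
    subst hab
    exact ⟨.nil, by simp⟩
  | succ k ih =>
    intro a b h
    have hb := b.isLt
    have ha1 : a.val + 1 < m := by omega
    obtain ⟨w, hw⟩ := ih ⟨a.val + 1, ha1⟩ b (by simp; omega)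
    refine ⟨.cons (adjV (by simp)) w, ?_⟩
    intro x hx
    rcases List.mem_cons.1 (by simpa using hx) with rfl | hx'
    · exact ⟨rfl, le_refl _, show a.val ≤ b.val by omega⟩
    · obtain ⟨h1, h2, h3⟩ := hw x hx'
      exact ⟨h1, by simp at h2; omega, h3⟩

lemma rowWalk {m : ℕ} (i a b : Fin m) :
    ∃ w : (gridGraph m).Walk (i, a) (i, b),
      ∀ x ∈ w.support, x.1 = i ∧ min a.val b.val ≤ x.2.val ∧ x.2.val ≤ max a.val b.val := by
  rcases le_total a.val b.val with hab | hab
  · obtain ⟨w, hw⟩ := rowWalkUp i (b.val - a.val) a b (by omega)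
    exact ⟨w, fun x hx => by obtain ⟨h1, h2, h3⟩ := hw x hx; exact ⟨h1, by omega, by omega⟩⟩
  · obtain ⟨w, hw⟩ := rowWalkUp i (a.val - b.val) b a (by omega)
    refine ⟨w.reverse, fun x hx => ?_⟩
    rw [SimpleGraph.Walk.support_reverse, List.mem_reverse] at hx
    obtain ⟨h1, h2, h3⟩ := hw x hx
    exact ⟨h1, by omega, by omega⟩

lemma colWalk {m : ℕ} (j a b : Fin m) :
    ∃ w : (gridGraph m).Walk (a, j) (b, j),
      ∀ x ∈ w.support, x.2 = j ∧ min a.val b.val ≤ x.1.val ∧ x.1.val ≤ max a.val b.val := by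
  rcases le_total a.val b.val with hab | hab
  · obtain ⟨w, hw⟩ := colWalkUp j (b.val - a.val) a b (by omega)
    exact ⟨w, fun x hx => by obtain ⟨h1, h2, h3⟩ := hw x hx; exact ⟨h1, by omega, by omega⟩⟩
  · obtain ⟨w, hw⟩ := colWalkUp j (a.val - b.val) b a (by omega)
    refine ⟨w.reverse, fun x hx => ?_⟩
    rw [SimpleGraph.Walk.support_reverse, List.mem_reverse] at hx
    obtain ⟨h1, h2, h3⟩ := hw x hx
    exact ⟨h1, by omega, by omega⟩


def cross (m : ℕ) (i j : Fin m) : Set (Fin m × Fin m) :=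
  {p | (p.1 = i ∧ p.2.val + 1 < m) ∨ (p.2 = j ∧ p.1.val + 1 < m)}

def bottom (m : ℕ) : Set (Fin m × Fin m) := {p | p.1.val + 1 = m}

def rightc (m : ℕ) : Set (Fin m × Fin m) := {p | p.2.val + 1 = m ∧ p.1.val + 1 < m}

lemma cross_conn {m : ℕ} {i j : Fin m} (hi : i.val + 1 < m) (hj : j.val + 1 < m) :
    GConnIn (gridGraph m) (cross m i j) := by
  have toCenter : ∀ u ∈ cross m i j,
      ∃ w : (gridGraph m).Walk u (i, j), ∀ x ∈ w.support, x ∈ cross m i j := by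
    rintro ⟨u1, u2⟩ (⟨h1, h2⟩ | ⟨h1, h2⟩)
    · simp only at h1 h2
      subst h1
      obtain ⟨w, hw⟩ := rowWalk u1 u2 j
      refine ⟨w, fun x hx => ?_⟩
      obtain ⟨hx1, hx2, hx3⟩ := hw x hx
      exact Or.inl ⟨hx1, by omega⟩
    · simp only at h1 h2
      subst h1
      obtain ⟨w, hw⟩ := colWalk u2 u1 i
      refine ⟨w, fun x hx => ?_⟩
      obtain ⟨hx1, hx2, hx3⟩ := hw x hx
      exact Or.inr ⟨hx1, by omega⟩
  intro u hu v hv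
  obtain ⟨w1, h1⟩ := toCenter u hu
  obtain ⟨w2, h2⟩ := toCenter v hv
  refine ⟨w1.append w2.reverse, fun x hx => ?_⟩
  rcases (SimpleGraph.Walk.mem_support_append_iff _ _).1 hx with h | h
  · exact h1 x h
  · rw [SimpleGraph.Walk.support_reverse, List.mem_reverse] at h
    exact h2 x h

lemma bottom_conn {m : ℕ} : GConnIn (gridGraph m) (bottom m) := by
  rintro ⟨u1, u2⟩ hu ⟨v1, v2⟩ hv
  simp only [bottom, Set.mem_setOf_eq] at hu hv
  have h1 : u1 = v1 := Fin.ext (by omega)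
  subst h1
  obtain ⟨w, hw⟩ := rowWalk u1 u2 v2
  refine ⟨w, fun x hx => ?_⟩
  obtain ⟨hx1, -, -⟩ := hw x hx
  show x.1.val + 1 = m
  rw [hx1]; omega

lemma rightc_conn {m : ℕ} : GConnIn (gridGraph m) (rightc m) := by
  rintro ⟨u1, u2⟩ hu ⟨v1, v2⟩ hv
  simp only [rightc, Set.mem_setOf_eq] at hu hv
  have h1 : u2 = v2 := Fin.ext (by omega)
  subst h1
  obtain ⟨w, hw⟩ := colWalk u2 u1 v1
  refine ⟨w, fun x hx => ?_⟩
  obtain ⟨hx1, hx2, hx3⟩ := hw x hx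
  refine ⟨by rw [hx1]; omega, by omega⟩


section touching
variable {m : ℕ} (hm : 2 ≤ m)

lemma touch_cc {i j i' j' : Fin m} (hi : i.val + 1 < m) (hj : j.val + 1 < m)
    (hi' : i'.val + 1 < m) (hj' : j'.val + 1 < m) :
    ((cross m i j) ∩ (cross m i' j')).Nonempty :=
  ⟨(i, j'), Or.inl ⟨rfl, hj'⟩, Or.inr ⟨rfl, hi⟩⟩

lemma touch_cb {i j : Fin m} (hj : j.val + 1 < m) :
    ∃ u ∈ cross m i j, ∃ v ∈ bottom m, (gridGraph m).Adj u v := by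
  have h2 : m - 2 + 1 < m := by omega
  have h1 : m - 1 < m := by omega
  refine ⟨(⟨m - 2, by omega⟩, j), Or.inr ⟨rfl, h2⟩,
    (⟨m - 1, h1⟩, j), by show m - 1 + 1 = m; omega, adjV (by simp; omega)⟩

lemma touch_cl {i j : Fin m} (hi : i.val + 1 < m) :
    ∃ u ∈ cross m i j, ∃ v ∈ rightc m, (gridGraph m).Adj u v := by
  refine ⟨(i, ⟨m - 2, by omega⟩), Or.inl ⟨rfl, by simp; omega⟩,
    (i, ⟨m - 1, by omega⟩), ⟨by simp; omega, hi⟩, adjH (by simp; omega)⟩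

lemma touch_bl (hm : 2 ≤ m) :
    ∃ u ∈ bottom m, ∃ v ∈ rightc m, (gridGraph m).Adj u v := by
  refine ⟨(⟨m - 1, by omega⟩, ⟨m - 1, by omega⟩), by show m - 1 + 1 = m; omega,
    (⟨m - 2, by omega⟩, ⟨m - 1, by omega⟩), ⟨by simp; omega, by simp; omega⟩,
    (adjV (by simp; omega)).symm⟩

end touching

lemma hit_card {m : ℕ} (hm : 2 ≤ m) (S : Finset (Fin m × Fin m))
    (hR : ∃ v ∈ bottom m, v ∈ S) (hL : ∃ v ∈ rightc m, v ∈ S)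
    (hC : ∀ i j : Fin m, i.val + 1 < m → j.val + 1 < m →
      ∃ v ∈ cross m i j, v ∈ S) :
    m + 1 ≤ S.card := by
  classical
  obtain ⟨r, hrB, hrS⟩ := hR
  obtain ⟨l, hlB, hlS⟩ := hL
  have hrl : l ≠ r := by
    intro h
    have h1 : r.1.val + 1 = m := hrB
    have h2 := hlB.2
    rw [h] at h2; omega
  set S' := (S.erase r).erase l with hS'def
  have hcardS' : S'.card + 2 = S.card := by
    have h1 : l ∈ S.erase r := Finset.mem_erase.2 ⟨hrl, hlS⟩
    have h2 := Finset.card_erase_of_mem h1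
    rw [← hS'def] at h2
    have h3 := Finset.card_erase_of_mem hrS
    have h4 : 1 ≤ (S.erase r).card := Finset.card_pos.2 ⟨l, h1⟩
    have h5 : 1 ≤ S.card := Finset.card_pos.2 ⟨r, hrS⟩
    omega
  have hS' : ∀ i j : Fin m, i.val + 1 < m → j.val + 1 < m →
      ∃ v ∈ cross m i j, v ∈ S' := by
    intro i j hi hj
    obtain ⟨v, hvc, hvS⟩ := hC i j hi hj
    have hv1 : v.1.val + 1 < m := by
      rcases hvc with ⟨h1, _⟩ | ⟨_, h2⟩
      · rw [h1]; exact hi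
      · exact h2
    have hv2 : v.2.val + 1 < m := by
      rcases hvc with ⟨_, h2⟩ | ⟨h1, _⟩
      · exact h2
      · rw [h1]; exact hj
    have hvr : v ≠ r := by intro h; have : r.1.val + 1 = m := hrB; rw [h] at hv1; omega
    have hvl : v ≠ l := by intro h; have := hlB.1; rw [h] at hv2; omega
    exact ⟨v, hvc, Finset.mem_erase.2 ⟨hvl, Finset.mem_erase.2 ⟨hvr, hvS⟩⟩⟩
  have hfiltercard :
      (Finset.univ.filter (fun i : Fin m => i.val + 1 < m)).card = m - 1 := by
    have heq : Finset.univ.filter (fun i : Fin m => i.val + 1 < m)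
        = Finset.univ.erase ⟨m - 1, by omega⟩ := by
      ext i
      simp only [Finset.mem_filter, Finset.mem_univ, true_and, Finset.mem_erase, ne_eq,
        Fin.ext_iff, and_true]
      have := i.isLt
      constructor
      · intro h h'; omega
      · intro h; omega
    rw [heq, Finset.card_erase_of_mem (Finset.mem_univ _)]
    simp
  have main : m - 1 ≤ S'.card := by
    by_cases hrow : ∀ i : Fin m, i.val + 1 < m →
        ∃ v ∈ S', v.1 = i ∧ v.2.val + 1 < m
    · have hsub : (Finset.univ.filter (fun i : Fin m => i.val + 1 < m))
          ⊆ S'.image Prod.fst := by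
        intro i hi
        simp only [Finset.mem_filter, Finset.mem_univ, true_and] at hi
        obtain ⟨v, hvS, hv1, -⟩ := hrow i hi
        exact Finset.mem_image.2 ⟨v, hvS, hv1⟩
      have hc1 := Finset.card_le_card hsub
      have hc2 := Finset.card_image_le (s := S') (f := Prod.fst)
      omega
    · push_neg at hrow
      obtain ⟨i, hi, hrow'⟩ := hrow
      have hcol : ∀ j : Fin m, j.val + 1 < m → ∃ v ∈ S', v.2 = j := by
        intro j hj
        obtain ⟨v, hvc, hvS'⟩ := hS' i j hi hj
        rcases hvc with ⟨h1, h2⟩ | ⟨h1, h2⟩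
        · exact absurd h2 (by have := hrow' v hvS' h1; omega)
        · exact ⟨v, hvS', h1⟩
      have hsub : (Finset.univ.filter (fun j : Fin m => j.val + 1 < m))
          ⊆ S'.image Prod.snd := by
        intro j hj
        simp only [Finset.mem_filter, Finset.mem_univ, true_and] at hj
        obtain ⟨v, hvS, hv2⟩ := hcol j hj
        exact Finset.mem_image.2 ⟨v, hvS, hv2⟩
      have hc1 := Finset.card_le_card hsub
      have hc2 := Finset.card_image_le (s := S') (f := Prod.snd)
      omega
  omega


/-- clamp an index into the valid range for crosses -/
def clampF {m : ℕ} (hm : 2 ≤ m) (i : Fin m) : Fin m :=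
  if i.val + 1 < m then i else ⟨0, by omega⟩

lemma clampF_lt {m : ℕ} (hm : 2 ≤ m) (i : Fin m) : (clampF hm i).val + 1 < m := by
  unfold clampF
  split
  · assumption
  · simp; omega

lemma clampF_eq {m : ℕ} (hm : 2 ≤ m) {i : Fin m} (h : i.val + 1 < m) :
    clampF hm i = i := if_pos h

/-- The bramble family, indexed by crosses plus two extra sets. -/
def bFam {m : ℕ} (hm : 2 ≤ m) : (Fin m × Fin m) ⊕ Bool → Set (Fin m × Fin m)
  | Sum.inl (i, j) => cross m (clampF hm i) (clampF hm j)
  | Sum.inr true => bottom m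
  | Sum.inr false => rightc m

lemma lower_bound {m : ℕ} (hm : 2 ≤ m) (d : TreeDecomp (gridGraph m)) :
    ∃ t, m + 1 ≤ (d.bag t).card := by
  classical
  have hmm : 0 < m := by omega
  have hne : (Finset.univ : Finset ((Fin m × Fin m) ⊕ Bool)).Nonempty :=
    ⟨Sum.inr true, Finset.mem_univ _⟩
  have hconn : ∀ a ∈ (Finset.univ : Finset ((Fin m × Fin m) ⊕ Bool)),
      GConnIn (gridGraph m) (bFam hm a) := by
    rintro (⟨i, j⟩ | b) -
    · exact cross_conn (clampF_lt hm i) (clampF_lt hm j)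
    · cases b
      · exact rightc_conn
      · exact bottom_conn
  have htouch : ∀ a ∈ (Finset.univ : Finset ((Fin m × Fin m) ⊕ Bool)),
      ∀ b ∈ (Finset.univ : Finset ((Fin m × Fin m) ⊕ Bool)),
      (bFam hm a ∩ bFam hm b).Nonempty ∨
        ∃ u ∈ bFam hm a, ∃ v ∈ bFam hm b, (gridGraph m).Adj u v := by
    rintro (⟨i, j⟩ | b) - (⟨i', j'⟩ | b') -
    · exact Or.inl (touch_cc (clampF_lt hm i) (clampF_lt hm j)
        (clampF_lt hm i') (clampF_lt hm j'))
    · cases b'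
      · exact Or.inr (touch_cl (clampF_lt hm i))
      · exact Or.inr (touch_cb (clampF_lt hm j))
    · cases b
      · -- rightc vs cross : flip the edge
        obtain ⟨u, hu, v, hv, hadj⟩ := touch_cl (m := m) (i := clampF hm i')
          (j := clampF hm j') (clampF_lt hm i')
        exact Or.inr ⟨v, hv, u, hu, hadj.symm⟩
      · obtain ⟨u, hu, v, hv, hadj⟩ := touch_cb (m := m) (i := clampF hm i')
          (j := clampF hm j') (clampF_lt hm j')
        exact Or.inr ⟨v, hv, u, hu, hadj.symm⟩
    · cases b <;> cases b'
      · exact Or.inl ⟨(⟨0, hmm⟩, ⟨m - 1, by omega⟩), ⟨by simp; omega, by simp; omega⟩,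
          ⟨by simp; omega, by simp; omega⟩⟩
      · obtain ⟨u, hu, v, hv, hadj⟩ := touch_bl (m := m) hm
        exact Or.inr ⟨v, hv, u, hu, hadj.symm⟩
      · exact Or.inr (touch_bl hm)
      · exact Or.inl ⟨(⟨m - 1, by omega⟩, ⟨0, hmm⟩), by show m - 1 + 1 = m; omega,
          by show m - 1 + 1 = m; omega⟩
  obtain ⟨t, ht⟩ := exists_hitting_bag d Finset.univ hne (bFam hm) hconn htouch
  refine ⟨t, hit_card hm (d.bag t) ?_ ?_ ?_⟩
  · obtain ⟨v, hv1, hv2⟩ := ht (Sum.inr true) (Finset.mem_univ _)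
    exact ⟨v, hv1, hv2⟩
  · obtain ⟨v, hv1, hv2⟩ := ht (Sum.inr false) (Finset.mem_univ _)
    exact ⟨v, hv1, hv2⟩
  · intro i j hi hj
    obtain ⟨v, hv1, hv2⟩ := ht (Sum.inl (i, j)) (Finset.mem_univ _)
    refine ⟨v, ?_, hv2⟩
    simpa only [bFam, clampF_eq hm hi, clampF_eq hm hj] using hv1



lemma pg_ivt {N : ℕ} {a b : Fin N} (w : (pathGraph N).Walk a b) :
    ∀ c : Fin N, min a.val b.val ≤ c.val → c.val ≤ max a.val b.val → c ∈ w.support := by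
  induction w with
  | nil =>
    intro c h1 h2
    simp only [SimpleGraph.Walk.support_nil, List.mem_singleton]
    exact Fin.ext (by omega)
  | @cons u v b h w ih =>
    intro c h1 h2
    by_cases hc : c = u
    · simp [hc]
    · have hcu : c.val ≠ u.val := fun he => hc (Fin.ext he)
      have hadj := (pathGraph_adj).1 h
      have := ih c (by omega) (by omega)
      simp [this]

lemma pg_interval {N : ℕ} {a b : Fin N} (w : (pathGraph N).Walk a b) (hw : w.IsPath) :
    ∀ x ∈ w.support, min a.val b.val ≤ x.val ∧ x.val ≤ max a.val b.val := by
  induction w with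
  | nil =>
    intro x hx
    rw [SimpleGraph.Walk.support_nil, List.mem_singleton] at hx
    subst hx; omega
  | @cons u v b h w ih =>
    rw [SimpleGraph.Walk.cons_isPath_iff] at hw
    have hadj := (pathGraph_adj).1 h
    have hunotin : ¬ (min v.val b.val ≤ u.val ∧ u.val ≤ max v.val b.val) := by
      intro ⟨h1, h2⟩
      exact hw.2 (pg_ivt w u h1 h2)
    intro x hx
    rw [SimpleGraph.Walk.support_cons, List.mem_cons] at hx
    rcases hx with rfl | hx
    · omega
    · have := ih hw.1 x hx
      omega

lemma pg_path_unique {N : ℕ} {a b : Fin N} (p : (pathGraph N).Walk a b) (hp : p.IsPath) :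
    ∀ q : (pathGraph N).Walk a b, q.IsPath → p = q := by
  induction p with
  | nil =>
    intro q hq
    exact ((SimpleGraph.Walk.isPath_iff_eq_nil (p := q)).1 hq).symm
  | @cons a u b h p ih =>
    intro q hq
    rw [SimpleGraph.Walk.cons_isPath_iff] at hp
    have hab : a ≠ b := by
      intro he
      subst he
      have := (SimpleGraph.Walk.isPath_iff_eq_nil (p := SimpleGraph.Walk.cons h p)).1
        ((SimpleGraph.Walk.cons_isPath_iff h p).2 hp)
      simp at this
    cases q with
    | nil => exact absurd rfl hab
    | @cons _ u' _ h' q' =>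
      rw [SimpleGraph.Walk.cons_isPath_iff] at hq
      have huu' : u = u' := by
        by_contra hne
        have h1 := (pathGraph_adj).1 h
        have h2 := (pathGraph_adj).1 h'
        have hvv : u.val ≠ u'.val := fun he => hne (Fin.ext he)
        -- a is strictly between u and b, or between u' and b, whichever walk
        -- goes the "wrong" way contains a
        rcases Nat.lt_or_ge a.val b.val with hab' | hab'
        · -- the downward-starting walk must return through a
          rcases h1 with h1 | h1
          · rcases h2 with h2 | h2
            · omega
            · exact hq.2 (pg_ivt q' a (by omega) (by omega))
          · exact hp.2 (pg_ivt p a (by omega) (by omega))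
        · have hab'' : b.val < a.val := by
            rcases Nat.lt_or_ge b.val a.val with h | h
            · exact h
            · exact absurd (Fin.ext (by omega)) hab
          rcases h1 with h1 | h1
          · exact hp.2 (pg_ivt p a (by omega) (by omega))
          · rcases h2 with h2 | h2
            · exact hq.2 (pg_ivt q' a (by omega) (by omega))
            · omega
      subst huu'
      rw [ih hp.1 q' hq.1]

lemma pg_acyclic (N : ℕ) : (pathGraph N).IsAcyclic := by
  apply isAcyclic_of_path_unique
  intro v w p q
  exact Subtype.ext (pg_path_unique p.val p.prop q.val q.prop)

lemma pg_connected {N : ℕ} (h : 0 < N) : (pathGraph N).Connected := by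
  have : Nonempty (Fin N) := ⟨⟨0, h⟩⟩
  exact ⟨pathGraph_preconnected N⟩


/-- bag of the sweep decomposition: vertices whose code is within `m` below `k`. -/
def ubag (m : ℕ) (k : Fin (m * m)) : Finset (Fin m × Fin m) :=
  Finset.univ.filter
    (fun p => p.1.val * m + p.2.val ≤ k.val ∧ k.val ≤ p.1.val * m + p.2.val + m)

lemma mem_ubag {m : ℕ} (k : Fin (m * m)) (p : Fin m × Fin m) :
    p ∈ ubag m k ↔
      p.1.val * m + p.2.val ≤ k.val ∧ k.val ≤ p.1.val * m + p.2.val + m := by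
  simp [ubag]

lemma enc_lt {m : ℕ} (i j : Fin m) : i.val * m + j.val < m * m := by
  have h1 := i.isLt
  have h2 := j.isLt
  have h3 : (i.val + 1) * m ≤ m * m := Nat.mul_le_mul_right m h1
  have h4 : (i.val + 1) * m = i.val * m + m := by ring
  omega

def enc {m : ℕ} (i j : Fin m) : Fin (m * m) := ⟨i.val * m + j.val, enc_lt i j⟩

lemma encode_inj {m a b c d : ℕ} (hb : b < m) (hd : d < m)
    (h : a * m + b = c * m + d) : a = c ∧ b = d := by
  rcases lt_trichotomy a c with hac | hac | hac
  · have h1 : a + 1 ≤ c := hac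
    have h2 : (a + 1) * m ≤ c * m := Nat.mul_le_mul_right m h1
    have h3 : (a + 1) * m = a * m + m := by ring
    omega
  · subst hac; omega
  · have h1 : c + 1 ≤ a := hac
    have h2 : (c + 1) * m ≤ a * m := Nat.mul_le_mul_right m h1
    have h3 : (c + 1) * m = c * m + m := by ring
    omega

lemma ubag_card {m : ℕ} (k : Fin (m * m)) : (ubag m k).card ≤ m + 1 := by
  classical
  have hinj : (ubag m k).card ≤ (Finset.Icc (k.val - m) k.val).card := by
    apply Finset.card_le_card_of_injOn (fun p => p.1.val * m + p.2.val)
    · intro p hp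
      rw [Finset.mem_coe, mem_ubag] at hp
      rw [Finset.mem_coe, Finset.mem_Icc]
      beta_reduce
      omega
    · intro p hp q hq hpq
      rw [Finset.mem_coe, mem_ubag] at hp hq
      obtain ⟨h1, h2⟩ := encode_inj p.2.isLt q.2.isLt hpq
      exact Prod.ext (Fin.ext h1) (Fin.ext h2)
  rw [Nat.card_Icc] at hinj
  omega

def gridDecomp (m : ℕ) (hm : 2 ≤ m) : TreeDecomp (gridGraph m) where
  ι := Fin (m * m)
  T := pathGraph (m * m)
  conn := pg_connected (by positivity)
  acyc := pg_acyclic _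
  bag := ubag m
  mem_vert := fun v => by
    refine ⟨enc v.1 v.2, ?_⟩
    simp only [mem_ubag, enc]
    omega
  mem_edge := by
    rintro ⟨u1, u2⟩ ⟨v1, v2⟩ ⟨hne, (⟨h1, h2⟩ | ⟨h1, h2⟩) | (⟨h1, h2⟩ | ⟨h1, h2⟩)⟩ <;>
      simp only at h1 h2
    · obtain rfl : u1 = v1 := h1
      refine ⟨enc u1 v2, ?_, ?_⟩ <;> simp only [mem_ubag, enc] <;> omega
    · obtain rfl : u2 = v2 := h1
      have hkey : u1.val * m + m = v1.val * m := by rw [← h2]; ring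
      refine ⟨enc v1 u2, ?_, ?_⟩ <;> simp only [mem_ubag, enc] <;> omega
    · obtain rfl : v1 = u1 := h1
      refine ⟨enc v1 u2, ?_, ?_⟩ <;> simp only [mem_ubag, enc] <;> omega
    · obtain rfl : v2 = u2 := h1
      have hkey : v1.val * m + m = u1.val * m := by rw [← h2]; ring
      refine ⟨enc u1 v2, ?_, ?_⟩ <;> simp only [mem_ubag, enc] <;> omega
  coherent := by
    intro v i j hvi hvj p hp x hx
    rw [mem_ubag] at hvi hvj ⊢
    have hb := pg_interval p hp x hx
    omega


end TWAux

/-- The `m × m` grid graph has tree-width exactly `m`, for `m ≥ 2`. -/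
theorem treewidth_gridGraph (m : ℕ) (hm : 2 ≤ m) : treewidth (gridGraph m) = m := by
  have hub : m ∈ {n : ℕ | ∃ d : TreeDecomp (gridGraph m), ∀ i, (d.bag i).card ≤ n + 1} :=
    ⟨TWAux.gridDecomp m hm, fun i => TWAux.ubag_card i⟩
  unfold treewidth
  apply le_antisymm
  · exact Nat.sInf_le hub
  · apply le_csInf ⟨m, hub⟩
    rintro n ⟨d, hd⟩
    obtain ⟨t, ht⟩ := TWAux.lower_bound hm d
    have := hd t
    omega
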